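/- arXiv:1606.01019 — 2 statements merged into one kernel-verified Lean document; each statement's English description precedes it below -/
import Mathlib

section
/- If $X$ is a Banach function space on $\mathbb{R}^n$ on which the Hardy–Littlewood maximal operator $M$ is weakly bounded (i.e., $\|\chi_{\{Mf>\lambda\}}\|_X \le C\lambda^{-1}\|f\|_X$ for all $f\in X$ and $\lambda>0$), then for all balls $B\subset\mathbb{R}^n$ and all measurable sets $E\subset B$, one has $\frac{|E|}{|B|} \le C\,\frac{\|\chi_E\|_X}{\|\chi_B\|_X}$. -/
open MeasureTheory Metric Set ENNReal NNReal Filter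

noncomputable section

abbrev Rn (n : ℕ) := EuclideanSpace ℝ (Fin n)

/-- The (extended) Hardy--Littlewood maximal operator for `ℝ≥0∞`-valued functions. -/
def HLmaxE {n : ℕ} (f : Rn n → ℝ≥0∞) (x : Rn n) : ℝ≥0∞ :=
  ⨆ (c : Rn n) (r : ℝ) (_ : 0 < r) (_ : x ∈ ball c r),
    (∫⁻ y in ball c r, f y) / volume (ball c r)

/-- The Hardy--Littlewood maximal operator `M`. -/
def HLmax {n : ℕ} (f : Rn n → ℝ) (x : Rn n) : ℝ≥0∞ :=
  HLmaxE (fun y => (‖f y‖₊ : ℝ≥0∞)) x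

/-- A Banach function space over `ℝⁿ`, described by its norm functional. -/
structure BanachFunctionSpace (n : ℕ) where
  N : (Rn n → ℝ) → ℝ≥0∞
  N_zero : ∀ f : Rn n → ℝ, N f = 0 ↔ f =ᵐ[volume] 0
  N_smul : ∀ (c : ℝ) (f : Rn n → ℝ), N (c • f) = (‖c‖₊ : ℝ≥0∞) * N f
  N_add : ∀ f g : Rn n → ℝ, N (f + g) ≤ N f + N g
  N_abs : ∀ f : Rn n → ℝ, N (fun x => |f x|) = N f
  N_mono : ∀ f g : Rn n → ℝ, (∀ᵐ x ∂volume, |g x| ≤ |f x|) → N g ≤ N f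
  N_fatou : ∀ (f : ℕ → Rn n → ℝ) (F : Rn n → ℝ),
      (∀ j, ∀ᵐ x ∂volume, 0 ≤ f j x ∧ f j x ≤ f (j + 1) x) →
      (∀ᵐ x ∂volume, Tendsto (fun j => f j x) atTop (nhds (F x))) →
      Tendsto (fun j => N (f j)) atTop (nhds (N F))
  N_ind_lt_top : ∀ F : Set (Rn n), MeasurableSet F → volume F < ∞ →
      N (F.indicator (fun _ => (1 : ℝ))) < ∞
  N_loc_int : ∀ F : Set (Rn n), MeasurableSet F → volume F < ∞ →
      ∃ C : ℝ≥0, ∀ h : Rn n → ℝ, (∫⁻ x in F, (‖h x‖₊ : ℝ≥0∞)) ≤ (C : ℝ≥0∞) * N h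

theorem weak_bounded_maximal_implies_measure_ratio_estimate
    {n : ℕ} (X : BanachFunctionSpace n)
    (hweak : ∃ C : ℝ, 0 < C ∧ ∀ (f : Rn n → ℝ) (lam : ℝ), 0 < lam →
      X.N ({x | ENNReal.ofReal lam < HLmax f x}.indicator (fun _ => (1 : ℝ)))
        ≤ ENNReal.ofReal (C / lam) * X.N f) :
    ∃ C : ℝ, 0 < C ∧ ∀ (c : Rn n) (r : ℝ), 0 < r →
      ∀ E : Set (Rn n), MeasurableSet E → E ⊆ ball c r →
      volume E / volume (ball c r)
        ≤ ENNReal.ofReal C *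
          (X.N (E.indicator (fun _ => (1 : ℝ))) /
            X.N ((ball c r).indicator (fun _ => (1 : ℝ)))) := by
  obtain ⟨C, hC, hw⟩ := hweak
  refine ⟨2 * C, by linarith, ?_⟩
  intro c rr hr E hE hEB
  set B := ball c rr with hB
  have hBpos : 0 < volume B := measure_ball_pos volume c hr
  have hBtop : volume B < ∞ := measure_ball_lt_top
  by_cases hE0 : volume E = 0
  · simp [hE0, ENNReal.zero_div]
  set ρ : ℝ≥0∞ := volume E / volume B with hρ
  have hEtop : volume E ≠ ∞ := ((measure_mono hEB).trans_lt hBtop).ne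
  have hρ0 : ρ ≠ 0 := by
    simp [hρ, ENNReal.div_eq_zero_iff, hE0, hBtop.ne]
  have hρtop : ρ ≠ ∞ := by
    simp [hρ, ENNReal.div_eq_top, hBpos.ne', hEtop, hE0]
  have hρR : 0 < ρ.toReal := ENNReal.toReal_pos hρ0 hρtop
  set lam : ℝ := ρ.toReal / 2 with hlam
  have hlampos : 0 < lam := by positivity
  have hfun : (fun y => (‖E.indicator (fun _ => (1 : ℝ)) y‖₊ : ℝ≥0∞))
      = E.indicator (fun _ => (1 : ℝ≥0∞)) := by
    funext y
    by_cases hy : y ∈ E <;> simp [Set.indicator, hy]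
  have hint : (∫⁻ y in B, (‖E.indicator (fun _ => (1 : ℝ)) y‖₊ : ℝ≥0∞)) = volume E := by
    rw [hfun, lintegral_indicator hE, setLIntegral_one, Measure.restrict_apply hE,
      Set.inter_eq_self_of_subset_left hEB]
  have hsub : B ⊆ {x | ENNReal.ofReal lam < HLmax (E.indicator (fun _ => (1 : ℝ))) x} := by
    intro x hx
    have h1 : ρ ≤ HLmax (E.indicator (fun _ => (1 : ℝ))) x := by
      have heq : ρ = (∫⁻ y in ball c rr, (‖E.indicator (fun _ => (1 : ℝ)) y‖₊ : ℝ≥0∞))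
          / volume (ball c rr) := by rw [← hB, hint]
      rw [heq]
      exact le_iSup_of_le c (le_iSup_of_le rr (le_iSup_of_le hr (le_iSup_of_le hx le_rfl)))
    have h2 : ENNReal.ofReal lam < ρ := by
      rw [ENNReal.ofReal_lt_iff_lt_toReal hlampos.le hρtop]
      rw [hlam]; linarith
    exact h2.trans_le h1
  have hmono : X.N (B.indicator (fun _ => (1 : ℝ)))
      ≤ X.N ({x | ENNReal.ofReal lam < HLmax (E.indicator (fun _ => (1 : ℝ))) x}.indicator
          (fun _ => (1 : ℝ))) := by
    apply X.N_mono
    refine Filter.Eventually.of_forall fun x => ?_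
    have hnn : ∀ (s : Set (Rn n)) (y : Rn n), (0:ℝ) ≤ s.indicator (fun _ => (1:ℝ)) y :=
      fun s y => Set.indicator_nonneg (fun _ _ => zero_le_one) y
    rw [abs_of_nonneg (hnn _ _), abs_of_nonneg (hnn _ _)]
    exact Set.indicator_le_indicator_of_subset hsub (fun _ => zero_le_one) x
  have hkey : X.N (B.indicator (fun _ => (1 : ℝ)))
      ≤ ENNReal.ofReal (C / lam) * X.N (E.indicator (fun _ => (1 : ℝ))) :=
    hmono.trans (hw (E.indicator (fun _ => (1 : ℝ))) lam hlampos)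
  have hmul : ρ * X.N (B.indicator (fun _ => (1 : ℝ)))
      ≤ ENNReal.ofReal (2 * C) * X.N (E.indicator (fun _ => (1 : ℝ))) := by
    calc ρ * X.N (B.indicator (fun _ => (1 : ℝ)))
        ≤ ρ * (ENNReal.ofReal (C / lam) * X.N (E.indicator (fun _ => (1 : ℝ)))) :=
          mul_le_mul_right hkey _
      _ = (ENNReal.ofReal (2 * lam) * ENNReal.ofReal (C / lam)) *
            X.N (E.indicator (fun _ => (1 : ℝ))) := by
          rw [← mul_assoc]
          congr 2
          rw [← ENNReal.ofReal_toReal hρtop]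
          congr 1
          rw [hlam]; ring
      _ = ENNReal.ofReal (2 * C) * X.N (E.indicator (fun _ => (1 : ℝ))) := by
          rw [← ENNReal.ofReal_mul (by positivity)]
          congr 1
          field_simp
  have hNB0 : X.N (B.indicator (fun _ => (1 : ℝ))) ≠ 0 := by
    intro h0
    rw [X.N_zero] at h0
    have h0' : volume {x | ¬ B.indicator (fun _ => (1 : ℝ)) x = (0 : Rn n → ℝ) x} = 0 := h0
    have hBsub : B ⊆ {x | ¬ B.indicator (fun _ => (1 : ℝ)) x = (0 : Rn n → ℝ) x} := by
      intro x hx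
      simp [Set.indicator_of_mem hx, hx]
    exact hBpos.ne' (measure_mono_null hBsub h0')
  have hNBtop : X.N (B.indicator (fun _ => (1 : ℝ))) ≠ ∞ :=
    (X.N_ind_lt_top B measurableSet_ball hBtop).ne
  rw [← mul_div_assoc,
    ENNReal.le_div_iff_mul_le (Or.inl hNB0) (Or.inl hNBtop)]
  exact hmul


end
end

section
/- Let $X$ be a Banach function space on $\mathbb{R}^n$ on which the Hardy–Littlewood maximal operator is weakly bounded. Then $\sup_{B\;\mathrm{ball}} \frac{1}{|B|}\|\chi_B\|_X\,\|\chi_B\|_{X'} < \infty$. -/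
open MeasureTheory Metric Set ENNReal NNReal Filter

noncomputable section

/-- The associate space norm of a Banach function space. -/
def BanachFunctionSpace.assoc {n : ℕ} (X : BanachFunctionSpace n) (f : Rn n → ℝ) : ℝ≥0∞ :=
  ⨆ (g : Rn n → ℝ) (_ : X.N g ≤ 1), ∫⁻ x, (‖f x * g x‖₊ : ℝ≥0∞)

/-- The associate space norm applied to `ℝ≥0∞`-valued functions. -/
def BanachFunctionSpace.assocE {n : ℕ} (X : BanachFunctionSpace n) (f : Rn n → ℝ≥0∞) : ℝ≥0∞ :=
  ⨆ (g : Rn n → ℝ) (_ : X.N g ≤ 1), ∫⁻ x, f x * (‖g x‖₊ : ℝ≥0∞)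

theorem sup_ball_norm_product_finite
    {n : ℕ} (X : BanachFunctionSpace n)
    (hweak : ∃ C : ℝ, 0 < C ∧ ∀ (f : Rn n → ℝ) (lam : ℝ), 0 < lam →
      X.N ({x | ENNReal.ofReal lam < HLmax f x}.indicator (fun _ => (1 : ℝ)))
        ≤ ENNReal.ofReal (C / lam) * X.N f) :
    (⨆ (c : Rn n) (r : ℝ) (_ : 0 < r),
      X.N ((ball c r).indicator (fun _ => (1 : ℝ))) *
        X.assoc ((ball c r).indicator (fun _ => (1 : ℝ))) / volume (ball c r)) < ∞ := by
  obtain ⟨C, hC, hW⟩ := hweak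
  refine lt_of_le_of_lt (b := ENNReal.ofReal C) ?_ ENNReal.ofReal_lt_top
  refine iSup_le fun c => iSup_le fun r => iSup_le fun hr => ?_
  set B := ball c r with hB
  have hBm : MeasurableSet B := measurableSet_ball
  have hμ0 : volume B ≠ 0 := (measure_ball_pos volume c hr).ne'
  have hμt : volume B ≠ ∞ := measure_ball_lt_top.ne
  set k := X.N (B.indicator fun _ => (1 : ℝ)) with hk
  have hkt : k ≠ ∞ := (X.N_ind_lt_top B hBm measure_ball_lt_top).ne
  rw [ENNReal.div_le_iff hμ0 hμt]
  by_cases hk0 : k = 0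
  · simp [hk0]
  -- main case
  rw [BanachFunctionSpace.assoc, ENNReal.mul_iSup]
  refine iSup_le fun g => ?_
  rw [ENNReal.mul_iSup]
  refine iSup_le fun hg => ?_
  have hI : (∫⁻ x, (‖(B.indicator (fun _ => (1 : ℝ))) x * g x‖₊ : ℝ≥0∞))
      = ∫⁻ x in B, (‖g x‖₊ : ℝ≥0∞) := by
    rw [← lintegral_indicator hBm]
    congr 1
    ext x
    by_cases hx : x ∈ B <;>
      simp [Set.indicator_of_mem, Set.indicator_of_notMem, hx]
  rw [hI]
  set I := ∫⁻ x in B, (‖g x‖₊ : ℝ≥0∞) with hIdef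
  -- key estimate : I / volume B ≤ ofReal C / k
  have key : I / volume B ≤ ENNReal.ofReal C / k := by
    refine ENNReal.le_of_forall_nnreal_lt fun ρ hρ => ?_
    rcases eq_or_ne ρ 0 with h0 | h0
    · simp [h0]
    have hρpos : (0 : ℝ) < ρ := lt_of_le_of_ne ρ.coe_nonneg (by exact_mod_cast h0.symm)
    have hsub : ∀ x ∈ B, ENNReal.ofReal ρ < HLmax g x := by
      intro x hx
      have h1 : I / volume B ≤ HLmax g x := by
        rw [HLmax, HLmaxE]
        exact le_iSup_of_le c (le_iSup_of_le r (le_iSup_of_le hr (le_iSup_of_le hx le_rfl)))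
      calc ENNReal.ofReal ρ = (ρ : ℝ≥0∞) := ENNReal.ofReal_coe_nnreal
        _ < I / volume B := hρ
        _ ≤ HLmax g x := h1
    have hNle : k ≤ ENNReal.ofReal (C / ρ) * X.N g := by
      refine le_trans (X.N_mono _ _ ?_) (hW g ρ hρpos)
      filter_upwards with x
      by_cases hx : x ∈ B
      · have hxS : x ∈ {x | ENNReal.ofReal (ρ : ℝ) < HLmax g x} := hsub x hx
        rw [Set.indicator_of_mem hx, Set.indicator_of_mem hxS]
      · simp [Set.indicator_of_notMem hx]
    have hkle : k ≤ ENNReal.ofReal C / ENNReal.ofReal (ρ : ℝ) := by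
      calc k ≤ ENNReal.ofReal (C / ρ) * X.N g := hNle
        _ ≤ ENNReal.ofReal (C / ρ) * 1 := mul_le_mul_right hg _
        _ = ENNReal.ofReal C / ENNReal.ofReal (ρ : ℝ) := by
            rw [mul_one, ENNReal.ofReal_div_of_pos hρpos]
    have hρne0 : ENNReal.ofReal (ρ : ℝ) ≠ 0 := (ENNReal.ofReal_pos.mpr hρpos).ne'
    have hρnet : ENNReal.ofReal (ρ : ℝ) ≠ ∞ := ENNReal.ofReal_ne_top
    have hmul : k * ENNReal.ofReal (ρ : ℝ) ≤ ENNReal.ofReal C :=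
      (ENNReal.le_div_iff_mul_le (Or.inl hρne0) (Or.inl hρnet)).mp hkle
    rw [← ENNReal.ofReal_coe_nnreal]
    rw [ENNReal.le_div_iff_mul_le (Or.inl hk0) (Or.inl hkt), mul_comm]
    exact hmul
  calc k * I = k * (I / volume B * volume B) := by
        rw [ENNReal.div_mul_cancel hμ0 hμt]
    _ ≤ k * (ENNReal.ofReal C / k * volume B) :=
        mul_le_mul_right (mul_le_mul_left key _) _
    _ = k * (ENNReal.ofReal C / k) * volume B := by rw [mul_assoc]
    _ = ENNReal.ofReal C * volume B := by rw [ENNReal.mul_div_cancel hk0 hkt]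

end
end
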